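/- Fix ε ∈ (0,1] and set λ_t = ε·t^{-3/4} for t ≥ 1. Given a sequence (j_t)_{t≥1} with j_t ∈ {0,1}, define sequences (x_t)_{t≥1} and (α_t)_{t≥1} recursively by: α_t = ∏_{s=1}^{t-1}(1 − x_s) (so α_1 = 1); R¹_{t-1} = max(0, ∑_{s=1}^{t-1} α_s x_s (1 − 2j_s)) and R²_{t-1} = max(0, ∑_{s=1}^{t-1} α_s (λ_s^{-1} x_s − 1)(1 − 2j_s)); and x_t = 0 if (R¹_{t-1}, R²_{t-1}) = (0,0), and x_t = λ_t²·R²_{t-1} / (R¹_{t-1} + λ_t·R²_{t-1}) otherwise. Then for every T ≥ 1: (1/T)·∑_{t=1}^T ∑_{s=1}^{t-1} α_s x_s (1 − 2j_s) ≤ 3ε. -/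

import Mathlib

open Finset

lemma bm_sum_rpow_aux : ∀ t : ℕ, 1 ≤ t →
    ∑ s ∈ Icc 1 t, (s : ℝ) ^ (-(3 : ℝ) / 2) ≤ 3 - 2 / Real.sqrt t := by
  intro t ht
  induction t with
  | zero => omega
  | succ n ih =>
    rcases Nat.eq_or_lt_of_le ht with h1 | h1
    · simp [← h1, Real.one_rpow]
      norm_num [Real.sqrt_one]
    · have hn : 1 ≤ n := by omega
      have hsum := ih hn
      rw [Finset.sum_Icc_succ_top (by omega : 1 ≤ n + 1)]
      have hkey : ((n + 1 : ℕ) : ℝ) ^ (-(3 : ℝ) / 2) ≤ 2 / Real.sqrt n - 2 / Real.sqrt ((n:ℝ) + 1) := by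
        set a := Real.sqrt n with ha
        set b := Real.sqrt ((n:ℝ) + 1) with hb
        have hnpos : (0 : ℝ) < n := by exact_mod_cast hn
        have han : (0 : ℝ) < a := Real.sqrt_pos.mpr hnpos
        have hbn : (0 : ℝ) < b := Real.sqrt_pos.mpr (by positivity)
        have ha2 : a ^ 2 = n := Real.sq_sqrt hnpos.le
        have hb2 : b ^ 2 = (n : ℝ) + 1 := Real.sq_sqrt (by positivity)
        have hab : a ≤ b := Real.sqrt_le_sqrt (by linarith)
        have hrw : ((n + 1 : ℕ) : ℝ) ^ (-(3 : ℝ) / 2) = 1 / b ^ 3 := by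
          have hc : ((n + 1 : ℕ) : ℝ) = (n : ℝ) + 1 := by push_cast; ring
          have hb3 : b ^ 3 = ((n : ℝ) + 1) ^ ((3 : ℝ) / 2) := by
            rw [hb, Real.sqrt_eq_rpow, ← Real.rpow_natCast (((n : ℝ) + 1) ^ ((1 : ℝ) / 2)) 3,
              ← Real.rpow_mul (by positivity)]
            norm_num
          rw [hc, hb3, one_div, ← Real.rpow_neg (by positivity)]
          norm_num
        rw [hrw]
        rw [div_sub_div _ _ (ne_of_gt han) (ne_of_gt hbn),
          div_le_div_iff₀ (by positivity) (by positivity)]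
        nlinarith [mul_pos han hbn, mul_pos (mul_pos han hbn) hbn, sq_nonneg (b - a),
          mul_le_mul_of_nonneg_right hab (sq_nonneg b), mul_pos (mul_pos hbn hbn) hbn]
      push_cast at hkey ⊢
      linarith

lemma bm_sum_rpow (t : ℕ) : ∑ s ∈ Icc 1 t, (s : ℝ) ^ (-(3 : ℝ) / 2) ≤ 3 := by
  rcases Nat.eq_zero_or_pos t with h | h
  · simp [h]
  · have h2 := bm_sum_rpow_aux t h
    have h3 : (0:ℝ) < Real.sqrt t := Real.sqrt_pos.mpr (by exact_mod_cast h)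
    have h4 : 0 < 2 / Real.sqrt t := by positivity
    linarith

set_option maxHeartbeats 1600000 in
/-- Double-sum (absorption-payoff) bound for the Big Match: `(1/T) ∑_{t=1}^T ∑_{s=1}^{t-1} α_s x_s (1 − 2j_s) ≤ 3ε` for every `T ≥ 1`. -/
theorem big_match_double_sum_bound
    (ε : ℝ) (hε : ε ∈ Set.Ioc (0 : ℝ) 1)
    (lam : ℕ → ℝ) (hlam : ∀ t : ℕ, 1 ≤ t → lam t = ε * (t : ℝ) ^ (-(3 : ℝ) / 4))
    (j : ℕ → ℝ) (hj : ∀ t, j t = 0 ∨ j t = 1)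
    (x α : ℕ → ℝ)
    (hα : ∀ t, α t = ∏ s ∈ Finset.Icc 1 (t - 1), (1 - x s))
    (R1 R2 : ℕ → ℝ)
    (hR1 : ∀ t, R1 t = max 0 (∑ s ∈ Finset.Icc 1 t, α s * x s * (1 - 2 * j s)))
    (hR2 : ∀ t, R2 t =
      max 0 (∑ s ∈ Finset.Icc 1 t, α s * ((lam s)⁻¹ * x s - 1) * (1 - 2 * j s)))
    (hx : ∀ t : ℕ, 1 ≤ t →
      x t = if R1 (t - 1) = 0 ∧ R2 (t - 1) = 0 then 0
        else lam t ^ 2 * R2 (t - 1) / (R1 (t - 1) + lam t * R2 (t - 1))) :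
    ∀ T : ℕ, 1 ≤ T →
      (T : ℝ)⁻¹ * (∑ t ∈ Finset.Icc 1 T, ∑ s ∈ Finset.Icc 1 (t - 1),
          α s * x s * (1 - 2 * j s)) ≤ 3 * ε := by
  obtain ⟨hε0, hε1⟩ := hε
  have hlam_pos : ∀ t : ℕ, 1 ≤ t → 0 < lam t := by
    intro t ht
    rw [hlam t ht]
    exact mul_pos hε0 (Real.rpow_pos_of_pos (by exact_mod_cast ht) _)
  have hlam_le1 : ∀ t : ℕ, 1 ≤ t → lam t ≤ 1 := by
    intro t ht
    rw [hlam t ht]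
    have h1 : ((t:ℝ)) ^ (-(3:ℝ)/4) ≤ 1 :=
      Real.rpow_le_one_of_one_le_of_nonpos (by exact_mod_cast ht) (by norm_num)
    have h2 : (0:ℝ) ≤ ((t:ℝ)) ^ (-(3:ℝ)/4) :=
      (Real.rpow_pos_of_pos (by exact_mod_cast ht) _).le
    nlinarith
  have hlam_anti : ∀ t : ℕ, 1 ≤ t → lam (t + 1) ≤ lam t := by
    intro t ht
    rw [hlam t ht, hlam (t+1) (by omega)]
    have h1 : ((t+1:ℕ):ℝ) ^ (-(3:ℝ)/4) ≤ ((t:ℕ):ℝ) ^ (-(3:ℝ)/4) := by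
      apply Real.rpow_le_rpow_of_nonpos (by exact_mod_cast ht) (by push_cast; linarith) (by norm_num)
    push_cast at h1 ⊢
    nlinarith
  -- main invariant
  have key : ∀ t : ℕ, (∀ s, 1 ≤ s → s ≤ t → 0 ≤ x s ∧ x s ≤ lam s) ∧
      R1 t ^ 2 + lam (t + 1) ^ 2 * R2 t ^ 2 ≤ 2 * ∑ s ∈ Icc 1 t, lam s ^ 2 := by
    intro t
    induction t with
    | zero =>
      refine ⟨fun s hs1 hs0 => by omega, ?_⟩
      have he : Icc 1 0 = (∅ : Finset ℕ) := by simp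
      rw [hR1 0, hR2 0, he]
      simp
    | succ t ih =>
      obtain ⟨ihx, ihΦ⟩ := ih
      have ht1 : (1:ℕ) ≤ t + 1 := by omega
      have hL : 0 < lam (t+1) := hlam_pos _ ht1
      have hr1 : 0 ≤ R1 t := by rw [hR1]; exact le_max_left _ _
      have hr2 : 0 ≤ R2 t := by rw [hR2]; exact le_max_left _ _
      have hxeq := hx (t+1) ht1
      simp only [Nat.add_sub_cancel] at hxeq
      have hdpos : ¬(R1 t = 0 ∧ R2 t = 0) → 0 < R1 t + lam (t+1) * R2 t := by
        intro h0
        rcases not_and_or.mp h0 with h | h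
        · have : 0 < R1 t := lt_of_le_of_ne hr1 (Ne.symm h)
          nlinarith
        · have : 0 < R2 t := lt_of_le_of_ne hr2 (Ne.symm h)
          nlinarith
      have hxb : 0 ≤ x (t+1) ∧ x (t+1) ≤ lam (t+1) := by
        rw [hxeq]
        split_ifs with h0
        · exact ⟨le_rfl, hL.le⟩
        · have hd := hdpos h0
          constructor
          · positivity
          · rw [div_le_iff₀ hd]; nlinarith
      have hxall : ∀ s, 1 ≤ s → s ≤ t + 1 → 0 ≤ x s ∧ x s ≤ lam s := by
        intro s hs1 hs2
        rcases Nat.lt_or_ge s (t+1) with h | h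
        · exact ihx s hs1 (by omega)
        · have hseq : s = t + 1 := by omega
          rw [hseq]; exact hxb
      refine ⟨hxall, ?_⟩
      have hαb : 0 ≤ α (t+1) ∧ α (t+1) ≤ 1 := by
        rw [hα]
        simp only [Nat.add_sub_cancel]
        constructor
        · apply Finset.prod_nonneg
          intro s hs
          simp only [Finset.mem_Icc] at hs
          have h1 := (hxall s hs.1 (by omega)).2
          have h2 := hlam_le1 s hs.1
          linarith
        · apply Finset.prod_le_one
          · intro s hs
            simp only [Finset.mem_Icc] at hs
            have h1 := (hxall s hs.1 (by omega)).2
            have h2 := hlam_le1 s hs.1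
            linarith
          · intro s hs
            simp only [Finset.mem_Icc] at hs
            have h1 := (hxall s hs.1 (by omega)).1
            linarith
      have hσ2 : (1 - 2 * j (t+1))^2 = 1 := by
        rcases hj (t+1) with h | h <;> rw [h] <;> norm_num
      set u1 := α (t+1) * x (t+1) * (1 - 2 * j (t+1)) with hu1
      set u2 := α (t+1) * ((lam (t+1))⁻¹ * x (t+1) - 1) * (1 - 2 * j (t+1)) with hu2
      have hS1 : ∑ s ∈ Icc 1 t, α s * x s * (1 - 2 * j s) ≤ R1 t := by
        rw [hR1]; exact le_max_right _ _
      have hS2 : ∑ s ∈ Icc 1 t, α s * ((lam s)⁻¹ * x s - 1) * (1 - 2 * j s) ≤ R2 t := by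
        rw [hR2]; exact le_max_right _ _
      have hR1n : 0 ≤ R1 (t+1) := by rw [hR1]; exact le_max_left _ _
      have hR2n : 0 ≤ R2 (t+1) := by rw [hR2]; exact le_max_left _ _
      have hR1sq : R1 (t+1) ^ 2 ≤ (R1 t + u1)^2 := by
        have h1 : R1 (t+1) ≤ |R1 t + u1| := by
          rw [hR1 (t+1), Finset.sum_Icc_succ_top ht1]
          apply max_le (abs_nonneg _)
          calc ∑ s ∈ Icc 1 t, α s * x s * (1 - 2 * j s) + u1 ≤ R1 t + u1 := by linarith
            _ ≤ |R1 t + u1| := le_abs_self _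
        calc R1 (t+1)^2 ≤ |R1 t + u1|^2 := by
              apply pow_le_pow_left₀ hR1n h1
          _ = (R1 t + u1)^2 := sq_abs _
      have hR2sq : R2 (t+1) ^ 2 ≤ (R2 t + u2)^2 := by
        have h1 : R2 (t+1) ≤ |R2 t + u2| := by
          rw [hR2 (t+1), Finset.sum_Icc_succ_top ht1]
          apply max_le (abs_nonneg _)
          calc ∑ s ∈ Icc 1 t, α s * ((lam s)⁻¹ * x s - 1) * (1 - 2 * j s) + u2
              ≤ R2 t + u2 := by linarith
            _ ≤ |R2 t + u2| := le_abs_self _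
        calc R2 (t+1)^2 ≤ |R2 t + u2|^2 := by
              apply pow_le_pow_left₀ hR2n h1
          _ = (R2 t + u2)^2 := sq_abs _
      have hcross : R1 t * u1 + lam (t+1)^2 * (R2 t * u2) = 0 := by
        by_cases h0 : R1 t = 0 ∧ R2 t = 0
        · rw [hu1, hu2, h0.1, h0.2]; ring
        · have hd := (hdpos h0).ne'
          have hxv : x (t+1) = lam (t+1)^2 * R2 t / (R1 t + lam (t+1) * R2 t) := by
            rw [hxeq, if_neg h0]
          rw [hu1, hu2, hxv]
          field_simp
          ring
      have hu1sq : u1^2 ≤ lam (t+1)^2 := by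
        have hexp : u1^2 = (α (t+1))^2 * (x (t+1))^2 * (1 - 2 * j (t+1))^2 := by
          rw [hu1]; ring
        rw [hexp, hσ2, mul_one]
        have h1 : (α (t+1))^2 ≤ 1 := by nlinarith [hαb.1, hαb.2]
        have h2 : (x (t+1))^2 ≤ lam (t+1)^2 := by nlinarith [hxb.1, hxb.2]
        nlinarith [sq_nonneg (x (t+1)), sq_nonneg (α (t+1))]
      have hu2sq : u2^2 ≤ 1 := by
        have hexp : u2^2 = (α (t+1))^2 * ((lam (t+1))⁻¹ * x (t+1) - 1)^2 * (1 - 2 * j (t+1))^2 := by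
          rw [hu2]; ring
        rw [hexp, hσ2, mul_one]
        have h1 : (α (t+1))^2 ≤ 1 := by nlinarith [hαb.1, hαb.2]
        have h3 : (lam (t+1))⁻¹ * x (t+1) ≤ 1 := by
          rw [inv_mul_eq_div, div_le_one hL]; exact hxb.2
        have h4 : 0 ≤ (lam (t+1))⁻¹ * x (t+1) := mul_nonneg (inv_nonneg.mpr hL.le) hxb.1
        have h2 : ((lam (t+1))⁻¹ * x (t+1) - 1)^2 ≤ 1 := by nlinarith
        nlinarith [sq_nonneg ((lam (t+1))⁻¹ * x (t+1) - 1), sq_nonneg (α (t+1))]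
      have hstep : R1 (t+1)^2 + lam (t+1)^2 * R2 (t+1)^2 ≤
          R1 t ^2 + lam (t+1)^2 * R2 t^2 + 2 * lam (t+1)^2 := by
        have e1 : (R1 t + u1)^2 = R1 t^2 + 2*(R1 t * u1) + u1^2 := by ring
        have e2 : lam (t+1)^2 * (R2 t + u2)^2 =
            lam (t+1)^2 * R2 t^2 + 2*(lam (t+1)^2 * (R2 t * u2)) + lam (t+1)^2 * u2^2 := by ring
        have h2' : lam (t+1)^2 * R2 (t+1)^2 ≤ lam (t+1)^2 * (R2 t + u2)^2 :=
          mul_le_mul_of_nonneg_left hR2sq (sq_nonneg _)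
        have h5 : lam (t+1)^2 * u2^2 ≤ lam (t+1)^2 * 1 :=
          mul_le_mul_of_nonneg_left hu2sq (sq_nonneg _)
        linarith [hR1sq, h2', e1, e2, hcross, hu1sq, h5]
      have hmono : lam (t+2)^2 ≤ lam (t+1)^2 := by
        have h1 := hlam_anti (t+1) ht1
        have h2 : 0 ≤ lam (t+1+1) := (hlam_pos (t+1+1) (by omega)).le
        nlinarith
      rw [Finset.sum_Icc_succ_top ht1]
      have hmono2 : lam (t+1+1)^2 * R2 (t+1)^2 ≤ lam (t+1)^2 * R2 (t+1)^2 :=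
        mul_le_mul_of_nonneg_right hmono (sq_nonneg _)
      linarith [ihΦ, hstep, hmono2]
  -- sum of lam^2 bound
  have hsumlam : ∀ t : ℕ, ∑ s ∈ Icc 1 t, lam s ^ 2 ≤ 3 * ε ^ 2 := by
    intro t
    have h1 : ∀ s ∈ Icc 1 t, lam s ^ 2 = ε ^ 2 * (s:ℝ) ^ (-(3:ℝ)/2) := by
      intro s hs
      simp only [mem_Icc] at hs
      rw [hlam s hs.1]
      have hs0 : (0:ℝ) < s := by exact_mod_cast hs.1
      rw [mul_pow, ← Real.rpow_natCast ((s:ℝ) ^ (-(3:ℝ)/4)) 2, ← Real.rpow_mul hs0.le]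
      norm_num
    rw [Finset.sum_congr rfl h1, ← Finset.mul_sum]
    have h2 := bm_sum_rpow t
    nlinarith [sq_nonneg ε, mul_nonneg (sq_nonneg ε) (show (0:ℝ) ≤ 3 - ∑ s ∈ Icc 1 t, (s:ℝ) ^ (-(3:ℝ)/2) by linarith)]
  have hR1b : ∀ t : ℕ, R1 t ≤ 3 * ε := by
    intro t
    have h1 := (key t).2
    have h2 := hsumlam t
    have h3 : R1 t ^ 2 ≤ 6 * ε ^ 2 := by
      nlinarith [mul_nonneg (sq_nonneg (lam (t+1))) (sq_nonneg (R2 t))]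
    have h0 : 0 ≤ R1 t := by rw [hR1]; exact le_max_left _ _
    nlinarith
  intro T hT
  have hTpos : (0:ℝ) < T := by exact_mod_cast hT
  rw [inv_mul_le_iff₀ hTpos]
  calc ∑ t ∈ Icc 1 T, ∑ s ∈ Icc 1 (t-1), α s * x s * (1 - 2 * j s)
      ≤ ∑ t ∈ Icc 1 T, 3 * ε := by
        apply Finset.sum_le_sum
        intro t ht
        have h1 : ∑ s ∈ Icc 1 (t-1), α s * x s * (1 - 2 * j s) ≤ R1 (t-1) := by
          rw [hR1]; exact le_max_right _ _
        linarith [hR1b (t-1)]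
    _ = (T:ℝ) * (3 * ε) := by
        have hc : (Icc 1 T).card = T := by rw [Nat.card_Icc]; omega
        rw [Finset.sum_const, hc, nsmul_eq_mul]
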